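/- Let S : ℕ → Bool be computably unpredictable, and let h, f : ℕ → Bool be computable functions. If the set {n | S n = true ∧ h n ≠ f n} is finite, then the set {n | h n ≠ f n} is finite. In words: if two computable functions agree on all but finitely many positions of a computably unpredictable set, they agree on all but finitely many positions overall. -/

import Mathlib

/-- If `S : ℕ → Bool` is computably unpredictable and two computable functions
    `h, f` agree on all but finitely many positions `n` with `S n = true`, then
    they agree on all but finitely many positions overall. -/
theorem agree_of_agree_on_unpredictable
    (S : ℕ → Bool)
    (hS : ∀ Γ : Set Bool, Γ.Nonempty → Γ ≠ Set.univ →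
      ∀ g : ℕ → Bool, Computable g → {n | g n = true}.Infinite →
        {n | g n = true ∧ S n ∈ Γ}.Infinite)
    (h f : ℕ → Bool) (hh : Computable h) (hf : Computable f)
    (hfin : {n | S n = true ∧ h n ≠ f n}.Finite) :
    {n | h n ≠ f n}.Finite := by
  by_contra hinf
  rw [← Set.not_infinite, not_not] at hinf
  have hg : Computable fun n => !(decide (h n = f n)) :=
    Primrec.not.to_comp.comp (Primrec.eq.decide.to_comp.comp hh hf)
  have hset : {n | (!(decide (h n = f n))) = true} = {n | h n ≠ f n} := by
    ext n; simp
  have h1 : {n | (!(decide (h n = f n))) = true ∧ S n ∈ ({true} : Set Bool)}.Infinite := by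
    apply hS {true} ⟨true, rfl⟩ _ _ hg
    · rw [hset]; exact hinf
    · intro he
      have : (false : Bool) ∈ ({true} : Set Bool) := he ▸ Set.mem_univ false
      simp at this
  have : {n | (!(decide (h n = f n))) = true ∧ S n ∈ ({true} : Set Bool)} ⊆
      {n | S n = true ∧ h n ≠ f n} := by
    intro n hn
    simp only [Set.mem_setOf_eq, Set.mem_singleton_iff, bne_iff_ne] at hn ⊢
    exact ⟨hn.2, by simpa using hn.1⟩
  exact (hfin.subset this).not_infinite h1
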